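/- arXiv:1710.01039 — 2 statements merged into one kernel-verified Lean document; each statement's English description precedes it below -/
import Mathlib

section
/- Let a and b be nonempty finite types, ρ a positive definite matrix of trace 1 on a × b, and τ a positive definite matrix of trace 1 on b. Then D(ρ‖ρ_A ⊗ₖ τ) = D(ρ‖ρ_A ⊗ₖ ρ_B) + D(ρ_B‖τ). -/
open Matrix Kronecker
open scoped ComplexOrder

/-- matrix logarithm via the continuous functional calculus -/
noncomputable def mlog {n : Type*} [Fintype n] [DecidableEq n] (A : Matrix n n ℂ) :
    Matrix n n ℂ := cfc Real.log A

/-- quantum relative entropy `D(ρ‖σ) = Re Tr[ρ (log ρ − log σ)]` -/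
noncomputable def relEnt {n : Type*} [Fintype n] [DecidableEq n]
    (ρ σ : Matrix n n ℂ) : ℝ := (Matrix.trace (ρ * (mlog ρ - mlog σ))).re

/-- partial trace over `b` -/
noncomputable def ptA {a b : Type*} [Fintype a] [Fintype b]
    (ρ : Matrix (a × b) (a × b) ℂ) : Matrix a a ℂ :=
  Matrix.of fun i i' => ∑ j, ρ (i, j) (i', j)

/-- partial trace over `a` -/
noncomputable def ptB {a b : Type*} [Fintype a] [Fintype b]
    (ρ : Matrix (a × b) (a × b) ℂ) : Matrix b b ℂ :=
  Matrix.of fun j j' => ∑ i, ρ (i, j) (i, j')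

section Key
variable {n : Type*} [Fintype n] [DecidableEq n]

lemma star_real_diagonal (d : n → ℝ) :
    star (Matrix.diagonal (fun i => (d i : ℂ))) = Matrix.diagonal (fun i => (d i : ℂ)) := by
  rw [Matrix.star_eq_conjTranspose, Matrix.diagonal_conjTranspose]
  congr 1
  simp [Pi.star_def, Complex.conj_ofReal]

lemma conj_diag_isSelfAdjoint (U : Matrix n n ℂ) (d : n → ℝ) :
    _root_.IsSelfAdjoint (U * Matrix.diagonal (fun i => (d i : ℂ)) * star U) := by
  have h : star (U * Matrix.diagonal (fun i => (d i : ℂ)) * star U)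
      = U * star (Matrix.diagonal (fun i => (d i : ℂ))) * star U := by
    simp only [StarMul.star_mul, star_star, mul_assoc]
  rw [_root_.IsSelfAdjoint, h, star_real_diagonal]

lemma spectrum_conj_diag (U : Matrix n n ℂ) (hU : U ∈ unitary (Matrix n n ℂ)) (d : n → ℝ) :
    spectrum ℝ (U * Matrix.diagonal (fun i => (d i : ℂ)) * star U) = Set.range d := by
  have h1 : spectrum ℝ (U * Matrix.diagonal (fun i => (d i : ℂ)) * star U)
      = spectrum ℝ (Matrix.diagonal (fun i => (d i : ℂ))) := by
    have := Unitary.spectrum_star_right_conjugate (R := ℝ)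
      (U := (⟨U, hU⟩ : unitary (Matrix n n ℂ))) (a := Matrix.diagonal (fun i => (d i : ℂ)))
    simpa using this
  rw [h1]
  ext x
  rw [← spectrum.algebraMap_mem_iff ℂ, _root_.spectrum_diagonal]
  simp
end Key

section Key2
variable {n : Type*} [Fintype n] [DecidableEq n]

lemma unitary_conj_assoc {U : Matrix n n ℂ} (hU : U ∈ unitary (Matrix n n ℂ))
    (X Y : Matrix n n ℂ) :
    (U * X * star U) * (U * Y * star U) = U * (X * Y) * star U := by
  have h : star U * U = 1 := Unitary.star_mul_self_of_mem hU
  calc (U * X * star U) * (U * Y * star U)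
      = U * X * (star U * U) * (Y * star U) := by simp only [mul_assoc]
    _ = U * (X * Y) * star U := by rw [h]; simp only [mul_one, mul_assoc]

lemma cfc_conj_diagonal {U : Matrix n n ℂ} (hU : U ∈ unitary (Matrix n n ℂ))
    (d : n → ℝ) (f : ℝ → ℝ) :
    cfc f (U * Matrix.diagonal (fun i => (d i : ℂ)) * star U)
      = U * Matrix.diagonal (fun i => (f (d i) : ℂ)) * star U := by
  set A := U * Matrix.diagonal (fun i => (d i : ℂ)) * star U with hAdef
  have hsa : _root_.IsSelfAdjoint A := conj_diag_isSelfAdjoint U d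
  have hspec : spectrum ℝ A = Set.range d := spectrum_conj_diag U hU d
  have hd : ∀ i, d i ∈ spectrum ℝ A := fun i => hspec ▸ Set.mem_range_self i
  let e : n → spectrum ℝ A := fun i => ⟨d i, hd i⟩
  let φ : C(spectrum ℝ A, ℝ) →⋆ₐ[ℝ] Matrix n n ℂ :=
  { toFun := fun g => U * Matrix.diagonal (fun i => ((g (e i) : ℝ) : ℂ)) * star U
    map_one' := by
      have h1 : (fun i => (((1 : C(spectrum ℝ A, ℝ)) (e i) : ℝ) : ℂ)) = fun _ => (1 : ℂ) := by
        funext i; simp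
      rw [h1]
      simp [Matrix.diagonal_one, Unitary.mul_star_self_of_mem hU]
    map_mul' := fun g₁ g₂ => by
      rw [unitary_conj_assoc hU, Matrix.diagonal_mul_diagonal]
      congr 1
      congr 1
      funext i
      simp
    map_zero' := by simp
    map_add' := fun g₁ g₂ => by
      have h2 : Matrix.diagonal (fun i => (((g₁ + g₂) (e i) : ℝ) : ℂ))
          = Matrix.diagonal (fun i => ((g₁ (e i) : ℝ) : ℂ))
            + Matrix.diagonal (fun i => ((g₂ (e i) : ℝ) : ℂ)) := by
        rw [Matrix.diagonal_add]
        congr 1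
        funext i
        simp
      rw [h2, mul_add, add_mul]
    commutes' := fun r => by
      have h1 : (fun i => (((algebraMap ℝ C(spectrum ℝ A, ℝ) r) (e i) : ℝ) : ℂ))
          = fun _ => (r : ℂ) := by funext i; simp [Algebra.algebraMap_eq_smul_one]
      have h2 : Matrix.diagonal (fun _ : n => (r : ℂ)) = r • (1 : Matrix n n ℂ) := by
        ext i j
        by_cases h : i = j <;> simp [Matrix.diagonal_apply, h, Complex.real_smul]
      rw [h1, h2, Algebra.algebraMap_eq_smul_one, mul_smul_comm, smul_mul_assoc, mul_one,
        Unitary.mul_star_self_of_mem hU]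
    map_star' := fun g => by
      have h : star (U * Matrix.diagonal (fun i => ((g (e i) : ℝ) : ℂ)) * star U)
          = U * star (Matrix.diagonal (fun i => ((g (e i) : ℝ) : ℂ))) * star U := by
        simp only [StarMul.star_mul, star_star, mul_assoc]
      simp only [star_trivial]
      rw [h, star_real_diagonal] }
  have hcont : Continuous φ := by
    have h0 : FiniteDimensional ℝ C(spectrum ℝ A, ℝ) :=
      FiniteDimensional.of_injective (ContinuousMap.coeFnLinearMap ℝ (M := ℝ))
        DFunLike.coe_injective
    exact LinearMap.continuous_of_finiteDimensional (φ.toAlgHom.toLinearMap)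
  have hφid : φ (ContinuousMap.restrict (spectrum ℝ A) (ContinuousMap.id ℝ)) = A := rfl
  have hf : ContinuousOn f (spectrum ℝ A) := by
    rw [continuousOn_iff_continuous_restrict]
    haveI : Finite (spectrum ℝ A) := Matrix.finite_real_spectrum
    exact continuous_of_discreteTopology
  rw [cfc_apply f A hsa hf, cfcHom_eq_of_continuous_of_map_id hsa φ hcont hφid]
  rfl
end Key2


section Kron
variable {a b : Type*} [Fintype a] [Fintype b] [DecidableEq a] [DecidableEq b]

lemma star_kron (X : Matrix a a ℂ) (Y : Matrix b b ℂ) :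
    star (X ⊗ₖ Y) = star X ⊗ₖ star Y := by
  ext p q
  simp [Matrix.star_apply, Matrix.conjTranspose_apply, Matrix.star_eq_conjTranspose,
    Matrix.kroneckerMap_apply]

lemma kron_unitary {U : Matrix a a ℂ} {V : Matrix b b ℂ}
    (hU : U ∈ unitary (Matrix a a ℂ)) (hV : V ∈ unitary (Matrix b b ℂ)) :
    U ⊗ₖ V ∈ unitary (Matrix (a × b) (a × b) ℂ) := by
  rw [Unitary.mem_iff]
  constructor
  · rw [star_kron, ← Matrix.mul_kronecker_mul, Unitary.star_mul_self_of_mem hU,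
      Unitary.star_mul_self_of_mem hV, Matrix.one_kronecker_one]
  · rw [star_kron, ← Matrix.mul_kronecker_mul, Unitary.mul_star_self_of_mem hU,
      Unitary.mul_star_self_of_mem hV, Matrix.one_kronecker_one]

lemma mlog_eq_of_posDef {n : Type*} [Fintype n] [DecidableEq n] {A : Matrix n n ℂ}
    (hA : A.PosDef) :
    mlog A = (hA.1.eigenvectorUnitary : Matrix n n ℂ)
      * Matrix.diagonal (fun i => (Real.log (hA.1.eigenvalues i) : ℂ))
      * star (hA.1.eigenvectorUnitary : Matrix n n ℂ) := by
  have hspec : A = (hA.1.eigenvectorUnitary : Matrix n n ℂ)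
      * Matrix.diagonal (fun i => ((hA.1.eigenvalues i : ℝ) : ℂ))
      * star (hA.1.eigenvectorUnitary : Matrix n n ℂ) := hA.1.spectral_theorem
  rw [mlog]
  conv_lhs => rw [hspec]
  rw [cfc_conj_diagonal (SetLike.coe_mem _)]

lemma mlog_kron {A : Matrix a a ℂ} {B : Matrix b b ℂ} (hA : A.PosDef) (hB : B.PosDef) :
    mlog (A ⊗ₖ B) = mlog A ⊗ₖ (1 : Matrix b b ℂ) + (1 : Matrix a a ℂ) ⊗ₖ mlog B := by
  set U := (hA.1.eigenvectorUnitary : Matrix a a ℂ) with hUdef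
  set V := (hB.1.eigenvectorUnitary : Matrix b b ℂ) with hVdef
  have hU : U ∈ unitary (Matrix a a ℂ) := SetLike.coe_mem _
  have hV : V ∈ unitary (Matrix b b ℂ) := SetLike.coe_mem _
  set dA := hA.1.eigenvalues with hdA
  set dB := hB.1.eigenvalues with hdB
  have hAeq : A = U * Matrix.diagonal (fun i => ((dA i : ℝ) : ℂ)) * star U :=
    hA.1.spectral_theorem
  have hBeq : B = V * Matrix.diagonal (fun j => ((dB j : ℝ) : ℂ)) * star V :=
    hB.1.spectral_theorem
  have hkron : A ⊗ₖ B = (U ⊗ₖ V)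
      * Matrix.diagonal (fun p : a × b => ((dA p.1 * dB p.2 : ℝ) : ℂ))
      * star (U ⊗ₖ V) := by
    rw [star_kron]
    conv_lhs => rw [hAeq, hBeq]
    rw [Matrix.mul_kronecker_mul, Matrix.mul_kronecker_mul, Matrix.diagonal_kronecker_diagonal]
    congr 2
    funext p
    push_cast
    ring
  rw [mlog, hkron, cfc_conj_diagonal (kron_unitary hU hV)]
  have hdiag : Matrix.diagonal (fun p : a × b => ((Real.log (dA p.1 * dB p.2) : ℝ) : ℂ))
      = Matrix.diagonal (fun i => (Real.log (dA i) : ℂ)) ⊗ₖ (1 : Matrix b b ℂ)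
        + (1 : Matrix a a ℂ) ⊗ₖ Matrix.diagonal (fun j => (Real.log (dB j) : ℂ)) := by
    ext ⟨i, j⟩ ⟨i', j'⟩
    rcases eq_or_ne i i' with hii | hii
    · subst hii
      rcases eq_or_ne j j' with hjj | hjj
      · subst hjj
        simp only [Matrix.diagonal_apply_eq, Matrix.add_apply, Matrix.kroneckerMap_apply,
          Matrix.one_apply_eq]
        rw [Real.log_mul (hA.eigenvalues_pos _).ne' (hB.eigenvalues_pos _).ne']
        push_cast
        ring
      · have h : ((i, j) : a × b) ≠ (i, j') := by simp [Prod.ext_iff, hjj]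
        simp [Matrix.diagonal_apply_ne _ h, Matrix.kroneckerMap_apply,
          Matrix.diagonal_apply_ne _ hjj, Matrix.one_apply_ne hjj]
    · have h : ((i, j) : a × b) ≠ (i', j') := by simp [Prod.ext_iff, hii]
      simp [Matrix.diagonal_apply_ne _ h, Matrix.kroneckerMap_apply,
        Matrix.diagonal_apply_ne _ hii, Matrix.one_apply_ne hii]
  rw [hdiag, mul_add, add_mul, mlog_eq_of_posDef hA, mlog_eq_of_posDef hB, star_kron]
  congr 1
  · rw [← Matrix.mul_kronecker_mul, ← Matrix.mul_kronecker_mul, mul_one,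
      Unitary.mul_star_self_of_mem hV]
  · rw [← Matrix.mul_kronecker_mul, ← Matrix.mul_kronecker_mul, mul_one,
      Unitary.mul_star_self_of_mem hU]
end Kron



section PT
variable {a b : Type*} [Fintype a] [Fintype b] [DecidableEq a] [DecidableEq b]

lemma ptB_posDef [Nonempty a] {ρ : Matrix (a × b) (a × b) ℂ} (hρ : ρ.PosDef) :
    (ptB ρ).PosDef := by
  refine Matrix.posDef_iff_dotProduct_mulVec.mpr ⟨?_, ?_⟩
  · show (ptB ρ).conjTranspose = ptB ρ
    ext j j'
    simp only [Matrix.conjTranspose_apply, ptB, Matrix.of_apply, star_sum]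
    exact Finset.sum_congr rfl fun i _ => hρ.1.apply _ _
  · intro x hx
    set y : a → (a × b → ℂ) := fun i p => if p.1 = i then x p.2 else 0 with hy
    have swap : ∀ F : b → b → a → ℂ,
        (∑ j, ∑ j', ∑ i, F j j' i) = ∑ i, ∑ j, ∑ j', F j j' i := fun F =>
      (Finset.sum_congr rfl fun j _ => Finset.sum_comm).trans Finset.sum_comm
    have lhs : dotProduct (star x) ((ptB ρ) *ᵥ x)
        = ∑ j, ∑ j', ∑ i, star (x j) * (ρ (i, j) (i, j') * x j') := by
      simp only [dotProduct, Matrix.mulVec, dotProduct, ptB, Matrix.of_apply, Pi.star_apply,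
        Finset.sum_mul, Finset.mul_sum]
    have hterm : ∀ i, dotProduct (star (y i)) (ρ *ᵥ (y i))
        = ∑ j, ∑ j', star (x j) * (ρ (i, j) (i, j') * x j') := by
      intro i
      simp only [dotProduct, Matrix.mulVec, dotProduct, Pi.star_apply, hy]
      simp only [apply_ite (star : ℂ → ℂ), star_zero, ite_mul, zero_mul, mul_ite, mul_zero,
        Finset.mul_sum]
      simp only [Fintype.sum_prod_type_right]
      simp [Finset.sum_ite_irrel, Finset.sum_const_zero, Finset.sum_ite_eq', Finset.mul_sum,
        mul_assoc]
    have key2 : dotProduct (star x) ((ptB ρ) *ᵥ x)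
        = ∑ i, dotProduct (star (y i)) (ρ *ᵥ (y i)) := by
      rw [lhs, swap]
      exact Finset.sum_congr rfl fun i _ => (hterm i).symm
    rw [key2]
    have hne : ∃ i, y i ≠ 0 := by
      obtain ⟨j0, hj0⟩ := Function.ne_iff.mp hx
      refine ⟨Classical.arbitrary a, fun h => hj0 ?_⟩
      have := congrFun h (Classical.arbitrary a, j0)
      simpa [hy] using this
    obtain ⟨i0, hi0⟩ := hne
    exact Finset.sum_pos' (fun i _ => hρ.posSemidef.dotProduct_mulVec_nonneg (y i))
      ⟨i0, Finset.mem_univ _, hρ.dotProduct_mulVec_pos hi0⟩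

lemma ptA_posDef [Nonempty b] {ρ : Matrix (a × b) (a × b) ℂ} (hρ : ρ.PosDef) :
    (ptA ρ).PosDef := by
  refine Matrix.posDef_iff_dotProduct_mulVec.mpr ⟨?_, ?_⟩
  · show (ptA ρ).conjTranspose = ptA ρ
    ext i i'
    simp only [Matrix.conjTranspose_apply, ptA, Matrix.of_apply, star_sum]
    exact Finset.sum_congr rfl fun j _ => hρ.1.apply _ _
  · intro x hx
    set y : b → (a × b → ℂ) := fun j p => if p.2 = j then x p.1 else 0 with hy
    have swap : ∀ F : a → a → b → ℂ,
        (∑ i, ∑ i', ∑ j, F i i' j) = ∑ j, ∑ i, ∑ i', F i i' j := fun F =>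
      (Finset.sum_congr rfl fun i _ => Finset.sum_comm).trans Finset.sum_comm
    have lhs : dotProduct (star x) ((ptA ρ) *ᵥ x)
        = ∑ i, ∑ i', ∑ j, star (x i) * (ρ (i, j) (i', j) * x i') := by
      simp only [dotProduct, Matrix.mulVec, dotProduct, ptA, Matrix.of_apply, Pi.star_apply,
        Finset.sum_mul, Finset.mul_sum]
    have hterm : ∀ j, dotProduct (star (y j)) (ρ *ᵥ (y j))
        = ∑ i, ∑ i', star (x i) * (ρ (i, j) (i', j) * x i') := by
      intro j
      simp only [dotProduct, Matrix.mulVec, dotProduct, Pi.star_apply, hy]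
      simp only [apply_ite (star : ℂ → ℂ), star_zero, ite_mul, zero_mul, mul_ite, mul_zero,
        Finset.mul_sum]
      simp only [Fintype.sum_prod_type]
      simp [Finset.sum_ite_irrel, Finset.sum_const_zero, Finset.sum_ite_eq', Finset.mul_sum,
        mul_assoc]
    have key2 : dotProduct (star x) ((ptA ρ) *ᵥ x)
        = ∑ j, dotProduct (star (y j)) (ρ *ᵥ (y j)) := by
      rw [lhs, swap]
      exact Finset.sum_congr rfl fun j _ => (hterm j).symm
    rw [key2]
    have hne : ∃ j, y j ≠ 0 := by
      obtain ⟨i0, hi0⟩ := Function.ne_iff.mp hx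
      refine ⟨Classical.arbitrary b, fun h => hi0 ?_⟩
      have := congrFun h (i0, Classical.arbitrary b)
      simpa [hy] using this
    obtain ⟨j0, hj0⟩ := hne
    exact Finset.sum_pos' (fun j _ => hρ.posSemidef.dotProduct_mulVec_nonneg (y j))
      ⟨j0, Finset.mem_univ _, hρ.dotProduct_mulVec_pos hj0⟩
end PT


section TR
variable {a b : Type*} [Fintype a] [Fintype b] [DecidableEq a] [DecidableEq b]

lemma trace_mul_one_kron (ρ : Matrix (a × b) (a × b) ℂ) (M : Matrix b b ℂ) :
    Matrix.trace (ρ * ((1 : Matrix a a ℂ) ⊗ₖ M)) = Matrix.trace (ptB ρ * M) := by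
  have swap : ∀ F : b → b → a → ℂ,
      (∑ j, ∑ j', ∑ i, F j j' i) = ∑ i, ∑ j, ∑ j', F j j' i := fun F =>
    (Finset.sum_congr rfl fun j _ => Finset.sum_comm).trans Finset.sum_comm
  have lhs : Matrix.trace (ρ * ((1 : Matrix a a ℂ) ⊗ₖ M))
      = ∑ i, ∑ j, ∑ j', ρ (i, j) (i, j') * M j' j := by
    simp only [Matrix.trace, Matrix.diag, Matrix.mul_apply, Matrix.kroneckerMap_apply,
      Matrix.one_apply, ite_mul, one_mul, zero_mul, mul_ite, mul_zero]
    simp only [Fintype.sum_prod_type]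
    simp [Finset.sum_ite_irrel, Finset.sum_const_zero, Finset.sum_ite_eq', Finset.mul_sum]
  have rhs : Matrix.trace (ptB ρ * M)
      = ∑ i, ∑ j, ∑ j', ρ (i, j) (i, j') * M j' j := by
    simp only [Matrix.trace, Matrix.diag, Matrix.mul_apply, ptB, Matrix.of_apply,
      Finset.sum_mul]
    rw [swap]
  rw [lhs, rhs]

end TR

/-- **Proposition 4.3, part 1.** The decoherence-free relative entropy equals the
mutual information plus `D(ρ_B‖τ)`:
`D(ρ‖ρ_A ⊗ τ) = D(ρ‖ρ_A ⊗ ρ_B) + D(ρ_B‖τ)`. -/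
theorem relEnt_eq_mutualInfo_add
    {a b : Type*} [Fintype a] [Fintype b] [DecidableEq a] [DecidableEq b]
    [Nonempty a] [Nonempty b]
    (ρ : Matrix (a × b) (a × b) ℂ) (hρ : ρ.PosDef) (hρtr : Matrix.trace ρ = 1)
    (τ : Matrix b b ℂ) (hτ : τ.PosDef) (hτtr : Matrix.trace τ = 1) :
    relEnt ρ (ptA ρ ⊗ₖ τ) = relEnt ρ (ptA ρ ⊗ₖ ptB ρ) + relEnt (ptB ρ) τ := by
  have hA : (ptA ρ).PosDef := ptA_posDef hρ
  have hB : (ptB ρ).PosDef := ptB_posDef hρ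
  have e1 : Matrix.trace (ρ * (mlog ρ - mlog (ptA ρ ⊗ₖ τ)))
      = Matrix.trace (ρ * mlog ρ) - Matrix.trace (ρ * (mlog (ptA ρ) ⊗ₖ (1 : Matrix b b ℂ)))
        - Matrix.trace (ptB ρ * mlog τ) := by
    rw [mlog_kron hA hτ, mul_sub, Matrix.trace_sub, mul_add, Matrix.trace_add,
      trace_mul_one_kron]
    ring
  have e2 : Matrix.trace (ρ * (mlog ρ - mlog (ptA ρ ⊗ₖ ptB ρ)))
      = Matrix.trace (ρ * mlog ρ) - Matrix.trace (ρ * (mlog (ptA ρ) ⊗ₖ (1 : Matrix b b ℂ)))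
        - Matrix.trace (ptB ρ * mlog (ptB ρ)) := by
    rw [mlog_kron hA hB, mul_sub, Matrix.trace_sub, mul_add, Matrix.trace_add,
      trace_mul_one_kron]
    ring
  have e3 : Matrix.trace (ptB ρ * (mlog (ptB ρ) - mlog τ))
      = Matrix.trace (ptB ρ * mlog (ptB ρ)) - Matrix.trace (ptB ρ * mlog τ) := by
    rw [mul_sub, Matrix.trace_sub]
  unfold relEnt
  rw [e1, e2, e3]
  simp only [Complex.sub_re, Complex.add_re]
  ring
end

section
/- Let n be a nonempty finite type, let ρ and σ be positive definite matrices of trace 1 on Matrix n n ℂ, and let s : ℝ with s > 0 be such that σ − s • 1 is positive semidefinite. Then D(ρ‖σ) ≤ −Real.log s. -/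
open Matrix
open scoped ComplexOrder

section Aux

variable {n : Type*} [Fintype n] [DecidableEq n]

lemma trace_mul_diagonal' (B : Matrix n n ℂ) (d : n → ℂ) :
    Matrix.trace (B * Matrix.diagonal d) = ∑ i, B i i * d i := by
  simp [Matrix.trace, Matrix.diag, Matrix.mul_diagonal]

/-- trace of `ρ * hA.cfc f` as a sum over eigenvalues. -/
lemma trace_mul_hermCfc (ρ : Matrix n n ℂ) {A : Matrix n n ℂ} (hA : A.IsHermitian)
    (f : ℝ → ℝ) :
    Matrix.trace (ρ * hA.cfc f) =
      ∑ i, (star (hA.eigenvectorUnitary : Matrix n n ℂ) * ρ *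
          (hA.eigenvectorUnitary : Matrix n n ℂ)) i i * (f (hA.eigenvalues i) : ℂ) := by
  have h1 : ρ * hA.cfc f =
      (ρ * (hA.eigenvectorUnitary : Matrix n n ℂ)) *
        Matrix.diagonal (RCLike.ofReal ∘ f ∘ hA.eigenvalues) *
        star (hA.eigenvectorUnitary : Matrix n n ℂ) := by
    simp only [Matrix.IsHermitian.cfc, Unitary.conjStarAlgAut_apply, mul_assoc]
  rw [h1, Matrix.trace_mul_cycle, trace_mul_diagonal']
  simp [mul_assoc]

/-- diagonal entries of a positive semidefinite matrix are nonnegative (as complex numbers). -/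
lemma posSemidef_diag_nonneg {P : Matrix n n ℂ} (hP : P.PosSemidef) (i : n) :
    0 ≤ P i i := by
  have := hP.dotProduct_mulVec_nonneg (Pi.single i 1)
  simpa [dotProduct, Matrix.mulVec, Pi.single_apply] using this

end Aux

/-- **Key estimate of Theorem 5.5.** If `σ ≥ s • 1` with `s > 0`, then
`D(ρ‖σ) ≤ −log s` (i.e. `D(ρ‖σ) ≤ log(1/σ_min)`). -/
theorem relEnt_le_neg_log_smallest_eigenvalue
    {n : Type*} [Fintype n] [DecidableEq n] [Nonempty n]
    (ρ σ : Matrix n n ℂ) (hρ : ρ.PosDef) (hρtr : Matrix.trace ρ = 1)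
    (hσ : σ.PosDef) (hσtr : Matrix.trace σ = 1)
    (s : ℝ) (hs : 0 < s) (hbound : (σ - s • (1 : Matrix n n ℂ)).PosSemidef) :
    relEnt ρ σ ≤ -Real.log s := by
  have hρH : ρ.IsHermitian := hρ.1
  have hσH : σ.IsHermitian := hσ.1
  -- the eigenvalues of ρ sum to 1
  have htrρ : Matrix.trace ρ = ∑ i, (hρH.eigenvalues i : ℂ) := by
    conv_lhs => rw [hρH.spectral_theorem]
    rw [Unitary.conjStarAlgAut_apply, Matrix.trace_mul_cycle, Unitary.coe_star_mul_self, one_mul,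
      Matrix.trace_diagonal]
    rfl
  have hsumρ : ∑ i, hρH.eigenvalues i = 1 := by
    have : ((∑ i, hρH.eigenvalues i : ℝ) : ℂ) = 1 := by
      push_cast
      rw [← htrρ, hρtr]
    exact_mod_cast this
  have hρpos : ∀ i, 0 < hρH.eigenvalues i := hρ.eigenvalues_pos
  have hρle1 : ∀ i, hρH.eigenvalues i ≤ 1 := by
    intro i
    calc hρH.eigenvalues i ≤ ∑ j, hρH.eigenvalues j :=
          Finset.single_le_sum (fun j _ => (hρpos j).le) (Finset.mem_univ i)
      _ = 1 := hsumρ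
  -- Part A : Re Tr(ρ log ρ) ≤ 0
  have hA1 : (Matrix.trace (ρ * mlog ρ)).re
      = ∑ i, hρH.eigenvalues i * Real.log (hρH.eigenvalues i) := by
    rw [mlog, hρH.cfc_eq, trace_mul_hermCfc ρ hρH Real.log]
    have hdiag : star (hρH.eigenvectorUnitary : Matrix n n ℂ) * ρ *
        (hρH.eigenvectorUnitary : Matrix n n ℂ)
        = Matrix.diagonal (RCLike.ofReal ∘ hρH.eigenvalues) :=
      by simpa [Unitary.conjStarAlgAut_apply] using hρH.conjStarAlgAut_star_eigenvectorUnitary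
    rw [hdiag]
    simp only [Matrix.diagonal_apply_eq, Function.comp_apply]
    rw [Complex.re_sum]
    congr 1
    ext i
    simp [Complex.mul_re]
  have hAle : (Matrix.trace (ρ * mlog ρ)).re ≤ 0 := by
    rw [hA1]
    apply Finset.sum_nonpos
    intro i _
    exact mul_nonpos_of_nonneg_of_nonpos (hρpos i).le
      (Real.log_nonpos (hρpos i).le (hρle1 i))
  -- eigenvalues of σ are at least s
  have hμ : ∀ i, s ≤ hσH.eigenvalues i := by
    intro i
    set v : EuclideanSpace ℂ n := hσH.eigenvectorBasis i with hv
    have hvnorm : ‖v‖ = 1 := hσH.eigenvectorBasis.orthonormal.1 i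
    have hvv : dotProduct (star (⇑v)) (⇑v) = 1 := by
      have : (inner ℂ v v : ℂ) = dotProduct (star (⇑v)) (⇑v) := by
        rw [EuclideanSpace.inner_eq_star_dotProduct, dotProduct_comm]
      rw [← this, inner_self_eq_norm_sq_to_K, hvnorm]
      norm_num
    have hbd := hbound.dotProduct_mulVec_nonneg (⇑v)
    rw [Matrix.sub_mulVec, dotProduct_sub] at hbd
    have h1 : σ *ᵥ ⇑v = (hσH.eigenvalues i : ℂ) • ⇑v := by
      have := hσH.mulVec_eigenvectorBasis i
      rw [← hv] at this
      convert this using 1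
      ext j
      simp [Complex.real_smul]
    have h2 : (s • (1 : Matrix n n ℂ)) *ᵥ ⇑v = (s : ℂ) • ⇑v := by
      ext j
      simp [Matrix.smul_mulVec, Complex.real_smul]
    rw [h1, h2, dotProduct_smul, dotProduct_smul, hvv] at hbd
    simp only [smul_eq_mul, mul_one, sub_nonneg] at hbd
    exact_mod_cast hbd
  -- Part C : Re Tr(ρ log σ) ≥ log s
  have hC : Real.log s ≤ (Matrix.trace (ρ * mlog σ)).re := by
    set U : Matrix n n ℂ := (hσH.eigenvectorUnitary : Matrix n n ℂ) with hU
    set B : Matrix n n ℂ := star U * ρ * U with hB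
    have hBpsd : B.PosSemidef := hρ.posSemidef.conjTranspose_mul_mul_same U
    have hBdiag : ∀ i, 0 ≤ (B i i).re := fun i => by
      have := posSemidef_diag_nonneg hBpsd i
      rw [Complex.le_def] at this
      simpa using this.1
    have hBim : ∀ i, (B i i).im = 0 := fun i => by
      have := posSemidef_diag_nonneg hBpsd i
      rw [Complex.le_def] at this
      simpa using this.2.symm
    have hBtr : ∑ i, (B i i).re = 1 := by
      have htr : Matrix.trace B = 1 := by
        rw [hB, Matrix.trace_mul_cycle, hU,
          (Matrix.mem_unitaryGroup_iff).mp hσH.eigenvectorUnitary.2, one_mul, hρtr]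
      have : (Matrix.trace B).re = 1 := by rw [htr]; rfl
      rw [← this, Matrix.trace, Complex.re_sum]
      rfl
    have hmain : (Matrix.trace (ρ * mlog σ)).re
        = ∑ i, (B i i).re * Real.log (hσH.eigenvalues i) := by
      rw [mlog, hσH.cfc_eq, trace_mul_hermCfc ρ hσH Real.log, Complex.re_sum]
      congr 1
      ext i
      rw [← hU, ← hB]
      simp [Complex.mul_re, hBim i]
    rw [hmain]
    calc Real.log s = ∑ i, (B i i).re * Real.log s := by
          rw [← Finset.sum_mul, hBtr, one_mul]
      _ ≤ ∑ i, (B i i).re * Real.log (hσH.eigenvalues i) := by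
          apply Finset.sum_le_sum
          intro i _
          exact mul_le_mul_of_nonneg_left (Real.log_le_log hs (hμ i)) (hBdiag i)
  -- combine
  have hsplit : relEnt ρ σ
      = (Matrix.trace (ρ * mlog ρ)).re - (Matrix.trace (ρ * mlog σ)).re := by
    rw [relEnt, mul_sub, Matrix.trace_sub, Complex.sub_re]
  rw [hsplit]
  linarith
end
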